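/- Let q = 2 (so K has exactly 4 elements) and n = 3. Then the graph G(V) has exactly 4 connected components. -/

import Mathlib

namespace FramePaper

variable {K : Type*} [Field K]

/-- The standard Hermitian form `Ψ(v,w) = ∑ i, v i * τ (w i)` on `Fin n → K`. -/
def Psi (τ : K → K) {n : ℕ} (v w : Fin n → K) : K :=
  ∑ i, v i * τ (w i)

lemma Psi_add_left (τ : K → K) {n : ℕ} (a b w : Fin n → K) :
    Psi τ (a + b) w = Psi τ a w + Psi τ b w := by
  simp [Psi, add_mul, Finset.sum_add_distrib]

lemma Psi_smul_left (τ : K → K) {n : ℕ} (c : K) (a w : Fin n → K) :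
    Psi τ (c • a) w = c * Psi τ a w := by
  simp [Psi, Finset.mul_sum, mul_assoc]

/-- The orthogonal complement `S^⊥ = {v | ∀ s ∈ S, Ψ(v,s) = 0}`. -/
def perp (τ : K → K) {n : ℕ} (S : Submodule K (Fin n → K)) :
    Submodule K (Fin n → K) where
  carrier := {v | ∀ s ∈ S, Psi τ v s = 0}
  add_mem' := by
    intro a b ha hb
    show ∀ s ∈ S, Psi τ (a + b) s = 0
    intro s hs
    rw [Psi_add_left, ha s hs, hb s hs, add_zero]
  zero_mem' := by
    show ∀ s ∈ S, Psi τ 0 s = 0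
    intro s hs
    simp [Psi]
  smul_mem' := by
    intro c a ha
    show ∀ s ∈ S, Psi τ (c • a) s = 0
    intro s hs
    rw [Psi_smul_left, ha s hs, mul_zero]

/-- A subspace `S` is non-degenerate iff `S ⊓ S^⊥ = ⊥`. -/
def Nondeg (τ : K → K) {n : ℕ} (S : Submodule K (Fin n → K)) : Prop :=
  S ⊓ perp τ S = ⊥

/-- Vertices of `G(V)`: the `1`-dimensional non-degenerate subspaces. -/
def IsVertex (τ : K → K) {n : ℕ} (S : Submodule K (Fin n → K)) : Prop :=
  Module.finrank K S = 1 ∧ Nondeg τ S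

/-- The graph `G(V)` on the `1`-dimensional non-degenerate subspaces of `V = Fin n → K`,
with `S, W` adjacent iff `S ≠ W` and `Ψ(s,w) = 0` for all `s ∈ S`, `w ∈ W`. -/
def FrameGraph (τ : K →+* K) (hτ2 : ∀ x, τ (τ x) = x) (n : ℕ) :
    SimpleGraph {S : Submodule K (Fin n → K) // IsVertex (⇑τ) S} where
  Adj S W := S ≠ W ∧ ∀ s ∈ S.1, ∀ w ∈ W.1, Psi (⇑τ) s w = 0
  symm := ⟨by
    rintro S W ⟨hne, h⟩
    refine ⟨hne.symm, fun w hw s hs => ?_⟩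
    have key : Psi (⇑τ) w s = τ (Psi (⇑τ) s w) := by
      simp only [Psi, map_sum, map_mul, hτ2]
      exact Finset.sum_congr rfl fun i _ => mul_comm _ _
    rw [key, h s hs w hw, map_zero]⟩
  loopless := ⟨fun S h => h.1 rfl⟩

/-- On a finite field with `q ^ 2` elements, `x ↦ x ^ q` is an involution. -/
lemma tau_invol [Fintype K] {q : ℕ} (hK : Fintype.card K = q ^ 2)
    (τ : K →+* K) (hτq : ∀ x, τ x = x ^ q) : ∀ x, τ (τ x) = x := fun x => by
  rw [hτq, hτq, ← pow_mul, ← pow_two, ← hK, FiniteField.pow_card]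

noncomputable instance instFintypeVertex [Fintype K] {n : ℕ} (τ : K → K) :
    Fintype {S : Submodule K (Fin n → K) // IsVertex τ S} := by
  have : Finite (Submodule K (Fin n → K)) :=
    Finite.of_injective (fun S => (S : Set (Fin n → K))) SetLike.coe_injective
  exact Fintype.ofFinite _

/-- The integer `d_m = q^{m-2} (q^{m-1} - (-1)^{m-1}) / (q+1)` (the division is exact). -/
def dZ (q m : ℕ) : ℤ :=
  ((q : ℤ) ^ (m - 2) * ((q : ℤ) ^ (m - 1) - (-1) ^ (m - 1))) / ((q : ℤ) + 1)


lemma Psi_smul_right (τ : K →+* K) {n : ℕ} (c : K) (v w : Fin n → K) :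
    Psi ⇑τ v (c • w) = τ c * Psi ⇑τ v w := by
  simp only [Psi, Pi.smul_apply, smul_eq_mul, map_mul, Finset.mul_sum]
  exact Finset.sum_congr rfl fun i _ => by ring

lemma vertex_of_span (τ : K →+* K) {n : ℕ} {v : Fin n → K} (hv : v ≠ 0)
    (hp : Psi ⇑τ v v ≠ 0) : IsVertex ⇑τ (Submodule.span K {v}) := by
  constructor
  · exact finrank_span_singleton hv
  · rw [Nondeg, eq_bot_iff]
    rintro x hx
    obtain ⟨hx1, hx2⟩ := Submodule.mem_inf.mp hx
    obtain ⟨c, rfl⟩ := Submodule.mem_span_singleton.mp hx1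
    have h := hx2 v (Submodule.mem_span_singleton_self v)
    rw [Psi_smul_left] at h
    rcases mul_eq_zero.mp h with h | h
    · simp [h]
    · exact absurd h hp

lemma span_of_vertex (τ : K →+* K) {n : ℕ} {S : Submodule K (Fin n → K)}
    (h : IsVertex ⇑τ S) :
    ∃ v, v ≠ 0 ∧ S = Submodule.span K {v} ∧ Psi ⇑τ v v ≠ 0 := by
  obtain ⟨h1, h2⟩ := h
  obtain ⟨v, hv0, hvspan⟩ := finrank_eq_one_iff'.mp h1
  have hv0' : (v : Fin n → K) ≠ 0 := fun h => hv0 (by exact_mod_cast Subtype.ext h)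
  have hS : S = Submodule.span K {(v : Fin n → K)} := by
    apply le_antisymm
    · intro x hx
      obtain ⟨c, hc⟩ := hvspan ⟨x, hx⟩
      exact Submodule.mem_span_singleton.mpr ⟨c, congrArg Subtype.val hc⟩
    · rw [Submodule.span_le, Set.singleton_subset_iff]; exact v.2
  refine ⟨v, hv0', hS, ?_⟩
  intro hpsi
  have hvmem : (v : Fin n → K) ∈ S ⊓ perp ⇑τ S := by
    refine Submodule.mem_inf.mpr ⟨v.2, ?_⟩
    intro s hs
    obtain ⟨c, hc⟩ := hvspan ⟨s, hs⟩
    have hc' : c • (v : Fin n → K) = s := congrArg Subtype.val hc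
    rw [← hc', Psi_smul_right, hpsi, mul_zero]
  rw [Nondeg] at h2
  rw [h2] at hvmem
  exact hv0' (Submodule.mem_bot K |>.mp hvmem)

lemma card_cc {V β : Type*} (G : SimpleGraph V) (L : V → β)
    (hadj : ∀ v w, G.Adj v w → L v = L w)
    (rep : β → V) (hrep : ∀ b, L (rep b) = b)
    (hconn : ∀ v, G.Reachable (rep (L v)) v) :
    Nat.card G.ConnectedComponent = Nat.card β := by
  have hreach : ∀ v w, G.Reachable v w → L v = L w := by
    intro v w h
    obtain ⟨pw⟩ := h
    induction pw with
    | nil => rfl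
    | cons h q ih => exact (hadj _ _ h).trans ih
  refine Nat.card_congr ⟨Quot.lift L hreach, fun b => G.connectedComponentMk (rep b), ?_, ?_⟩
  · intro C
    refine SimpleGraph.ConnectedComponent.ind (fun v => ?_) C
    exact SimpleGraph.ConnectedComponent.sound (hconn v)
  · intro b
    exact hrep b

lemma card_cc' {V β I' : Type*} (G : SimpleGraph V) (F : I' → V) (hF : Function.Bijective F)
    (ℓ : I' → β)
    (hadj : ∀ x y, G.Adj (F x) (F y) → ℓ x = ℓ y)
    (rep : β → I') (hrep : ∀ b, ℓ (rep b) = b)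
    (hconn : ∀ x, G.Reachable (F (rep (ℓ x))) (F x)) :
    Nat.card G.ConnectedComponent = Nat.card β := by
  let e := Equiv.ofBijective F hF
  have hFe : ∀ v, F (e.symm v) = v := fun v => e.apply_symm_apply v
  refine card_cc G (fun v => ℓ (e.symm v)) ?_ (fun b => F (rep b)) ?_ ?_
  · intro v w h
    apply hadj
    rwa [hFe, hFe]
  · intro b
    show ℓ (e.symm (F (rep b))) = b
    rw [show F (rep b) = e (rep b) from rfl, e.symm_apply_apply]
    exact hrep b
  · intro v
    have := hconn (e.symm v)
    rwa [hFe] at this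

set_option maxHeartbeats 1600000 in
lemma main_aux [Fintype K] (hK : Fintype.card K = 2 ^ 2)
    (τ : K →+* K) (hτq : ∀ x, τ x = x ^ 2) (hτ2 : ∀ x, τ (τ x) = x) :
    Nat.card ((FrameGraph τ hτ2 3).ConnectedComponent) = 4 := by
  classical
  have h4 : (4 : K) = 0 := by
    have := FiniteField.cast_card_eq_zero K
    rw [hK] at this; norm_num at this; exact_mod_cast this
  have h2 : (2 : K) = 0 := by
    have h : (2 : K) * 2 = 0 := by linear_combination h4
    rcases mul_eq_zero.mp h with h | h <;> exact h
  have cube : ∀ x : K, x ≠ 0 → x ^ 3 = 1 := by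
    intro x hx
    have := FiniteField.pow_card_sub_one_eq_one x hx
    rw [hK] at this; norm_num at this; exact this
  obtain ⟨a, ha, ha0, ha1⟩ : ∃ a : K, a * a = a + 1 ∧ a ≠ 0 ∧ a ≠ 1 := by
    obtain ⟨x, hx0, hx1⟩ : ∃ x : K, x ≠ 0 ∧ x ≠ 1 := by
      by_contra hcon
      push_neg at hcon
      have hsub : (Finset.univ : Finset K) ⊆ {0, 1} := by
        intro x _
        rcases eq_or_ne x 0 with h0 | h0
        · simp [h0]
        · simp [hcon x h0]
      have hcard := Finset.card_le_card hsub
      have hle : ({0, 1} : Finset K).card ≤ 2 :=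
        (Finset.card_insert_le _ _).trans (by simp)
      rw [Finset.card_univ, hK] at hcard
      omega
    refine ⟨x, ?_, hx0, hx1⟩
    have h3 := cube x hx0
    have hfac : (x - 1) * (x * x + x + 1) = 0 := by linear_combination h3
    rcases mul_eq_zero.mp hfac with h | h
    · exact absurd (by linear_combination h) hx1
    · linear_combination h - x * h2 - h2
  have hA0 : a + 1 ≠ 0 := fun h => ha1 (by linear_combination h - h2)
  have ha3 : a ^ 3 = 1 := by linear_combination (a + 1) * ha + a * h2
  set p : ZMod 3 → K := fun i => a ^ i.val with hp
  have ppow : ∀ m : ℕ, a ^ m = a ^ (m % 3) := by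
    intro m
    conv_lhs => rw [← Nat.div_add_mod m 3]
    rw [pow_add, pow_mul, ha3, one_pow, one_mul]
  have pmul : ∀ i j : ZMod 3, p i * p j = p (i + j) := by
    intro i j
    simp only [hp]
    rw [← pow_add, ppow (i.val + j.val), ZMod.val_add]
  have p0 : p 0 = 1 := by
    simp only [hp]; rw [show (0 : ZMod 3).val = 0 from rfl, pow_zero]
  have p1 : p 1 = a := by
    simp only [hp]; rw [show (1 : ZMod 3).val = 1 from rfl, pow_one]
  have p2 : p 2 = a * a := by
    simp only [hp]; rw [show (2 : ZMod 3).val = 2 from rfl, pow_two]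
  have pnz : ∀ i, p i ≠ 0 := fun i => pow_ne_zero _ ha0
  have zcases : ∀ z : ZMod 3, z = 0 ∨ z = 1 ∨ z = 2 := by decide
  have p_eq_one : ∀ u : ZMod 3, p u = 1 → u = 0 := by
    intro u hu
    rcases zcases u with h | h | h
    · exact h
    · subst h; rw [p1] at hu; exact absurd hu ha1
    · subst h; rw [p2] at hu
      exact absurd (show a = 0 by linear_combination hu - ha) ha0
  have pinj : ∀ i j : ZMod 3, p i = p j → i = j := by
    intro i j h
    have hm : p (i - j) * p j = 1 * p j := by
      rw [pmul, sub_add_cancel, h, one_mul]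
    have := p_eq_one _ (mul_right_cancel₀ (pnz j) hm)
    exact sub_eq_zero.mp this
  have kzero : ∀ u : ZMod 3, u ≠ 0 → 1 + p u + p (-u) = 0 := by
    intro u hu
    rcases zcases u with h | h | h
    · exact absurd h hu
    · subst h
      rw [show -(1 : ZMod 3) = 2 by decide, p1, p2]
      linear_combination ha + (a + 1) * h2
    · subst h
      rw [show -(2 : ZMod 3) = 1 by decide, p2, p1]
      linear_combination ha + (a + 1) * h2
  have ksum : ∀ u v : ZMod 3, 1 + p u + p v = 0 → u + v = 0 := by
    intro u v h
    by_contra hne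
    rcases zcases u with hu | hu | hu <;> rcases zcases v with hv | hv | hv <;>
      subst hu <;> subst hv <;>
      simp only [p0, p1, p2] at h
    · exact one_ne_zero (show (1 : K) = 0 by linear_combination h - h2)
    · exact ha0 (by linear_combination h - h2)
    · exact hA0 (by linear_combination h - h2 - ha)
    · exact ha0 (by linear_combination h - h2)
    · exact one_ne_zero (show (1 : K) = 0 by linear_combination h - a * h2)
    · exact hne (by decide)
    · exact hA0 (by linear_combination h - h2 - ha)
    · exact hne (by decide)
    · exact one_ne_zero (show (1 : K) = 0 by linear_combination h - (a * a) * h2)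
  have exp : ∀ x : K, x ≠ 0 → ∃ u, p u = x := by
    intro x hx
    have h3 := cube x hx
    have hfac : (x + 1) * ((x + a) * (x + (a * a))) = 0 := by
      linear_combination h3 + (x ^ 2 + (2 + a) * x + (1 + a)) * ha +
        ((a + 1) * x ^ 2 + (2 * a + 1) * x + (a + 1)) * h2
    rcases mul_eq_zero.mp hfac with h | h
    · exact ⟨0, by rw [p0]; linear_combination h2 - h⟩
    rcases mul_eq_zero.mp h with h | h
    · exact ⟨1, by rw [p1]; linear_combination a * h2 - h⟩
    · exact ⟨2, by rw [p2]; linear_combination (a * a) * h2 - h⟩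
  -- the twelve vectors
  set f : Fin 3 ⊕ ZMod 3 × ZMod 3 → (Fin 3 → K) := fun x =>
    Sum.elim (fun i => Pi.single i (1 : K)) (fun z => ![1, p z.1, p z.2]) x with hf
  have psi3 : ∀ v w : Fin 3 → K,
      Psi ⇑τ v w = v 0 * (w 0 * w 0) + v 1 * (w 1 * w 1) + v 2 * (w 2 * w 2) := by
    intro v w
    simp [Psi, Fin.sum_univ_three, hτq, pow_two]
  have psi_ll : ∀ i k : Fin 3, i ≠ k → Psi ⇑τ (f (Sum.inl i)) (f (Sum.inl k)) = 0 := by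
    intro i k hik
    rw [psi3]
    simp only [hf, Sum.elim_inl]
    fin_cases i <;> fin_cases k <;>
      first
        | exact absurd rfl hik
        | simp [Pi.single_apply]
  have psi_ll_self : ∀ i : Fin 3, Psi ⇑τ (f (Sum.inl i)) (f (Sum.inl i)) ≠ 0 := by
    intro i
    rw [psi3]
    simp only [hf, Sum.elim_inl]
    fin_cases i <;> simp [Pi.single_apply]
  have psi_lr : ∀ (i : Fin 3) (z : ZMod 3 × ZMod 3),
      Psi ⇑τ (f (Sum.inl i)) (f (Sum.inr z)) ≠ 0 := by
    intro i z
    rw [psi3]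
    simp only [hf, Sum.elim_inl, Sum.elim_inr]
    fin_cases i <;>
      simp [Pi.single_apply, mul_ne_zero (pnz z.1) (pnz z.1), mul_ne_zero (pnz z.2) (pnz z.2)]
  have psi_rl : ∀ (z : ZMod 3 × ZMod 3) (k : Fin 3),
      Psi ⇑τ (f (Sum.inr z)) (f (Sum.inl k)) ≠ 0 := by
    intro z k
    rw [psi3]
    simp only [hf, Sum.elim_inl, Sum.elim_inr]
    fin_cases k <;> simp [Pi.single_apply, pnz z.1, pnz z.2]
  have psi_rr : ∀ z z' : ZMod 3 × ZMod 3,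
      Psi ⇑τ (f (Sum.inr z)) (f (Sum.inr z')) =
        1 + p (z.1 + (z'.1 + z'.1)) + p (z.2 + (z'.2 + z'.2)) := by
    intro z z'
    rw [psi3]
    simp only [hf, Sum.elim_inr, Matrix.cons_val_zero, Matrix.cons_val_one, Matrix.head_cons,
      Matrix.cons_val_two, Matrix.tail_cons]
    rw [pmul z'.1 z'.1, pmul z.1 (z'.1 + z'.1), pmul z'.2 z'.2, pmul z.2 (z'.2 + z'.2)]
    ring
  have fnz : ∀ x, f x ≠ 0 := by
    rintro (i | z) h
    · have := congrFun h i
      simp [hf] at this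
    · have := congrFun h 0
      simp [hf] at this
  have fpsi : ∀ x, Psi ⇑τ (f x) (f x) ≠ 0 := by
    rintro (i | z)
    · exact psi_ll_self i
    · rw [psi_rr,
        show z.1 + (z.1 + z.1) = 0 from (by decide : ∀ w : ZMod 3, w + (w + w) = 0) z.1,
        show z.2 + (z.2 + z.2) = 0 from (by decide : ∀ w : ZMod 3, w + (w + w) = 0) z.2, p0]
      intro hcon
      exact one_ne_zero (show (1 : K) = 0 by linear_combination hcon - h2)
  have hV : ∀ x, IsVertex ⇑τ (Submodule.span K {f x}) := fun x =>
    vertex_of_span τ (fnz x) (fpsi x)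
  set F : Fin 3 ⊕ ZMod 3 × ZMod 3 → {S : Submodule K (Fin 3 → K) // IsVertex ⇑τ S} :=
    fun x => ⟨Submodule.span K {f x}, hV x⟩ with hF
  have hF1 : ∀ x, (F x).1 = Submodule.span K {f x} := fun x => by rw [hF]
  have hFinj : Function.Injective F := by
    intro x y hxy
    have hmem : f x ∈ Submodule.span K {f y} := by
      have hspan : Submodule.span K {f x} = Submodule.span K {f y} := by
        rw [← hF1 x, ← hF1 y, hxy]
      rw [← hspan]
      exact Submodule.mem_span_singleton_self _
    obtain ⟨c, hc⟩ := Submodule.mem_span_singleton.mp hmem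
    have hcne : c ≠ 0 := by
      rintro rfl
      rw [zero_smul] at hc
      exact fnz x hc.symm
    rcases x with i | ⟨i, j⟩ <;> rcases y with k | ⟨i', j'⟩
    · rcases eq_or_ne i k with h | h
      · rw [h]
      · exfalso
        simp only [hf, Sum.elim_inl] at hc
        have h1 := congrFun hc i
        simp [Pi.single_apply, h, Ne.symm h] at h1
    · exfalso
      obtain ⟨m, hm⟩ := exists_ne i
      have hco := congrFun hc m
      simp only [hf, Sum.elim_inl, Sum.elim_inr, Pi.smul_apply, smul_eq_mul] at hco
      rw [Pi.single_eq_of_ne hm] at hco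
      have hnz : (![1, p i', p j'] : Fin 3 → K) m ≠ 0 := by
        fin_cases m <;> simp [pnz]
      exact (mul_ne_zero hcne hnz) hco
    · exfalso
      obtain ⟨m, hm⟩ := exists_ne k
      have hco := congrFun hc m
      simp only [hf, Sum.elim_inl, Sum.elim_inr, Pi.smul_apply, smul_eq_mul] at hco
      rw [Pi.single_eq_of_ne hm, mul_zero] at hco
      have hnz : (![1, p i, p j] : Fin 3 → K) m ≠ 0 := by
        fin_cases m <;> simp [pnz]
      exact hnz hco.symm
    · simp only [hf, Sum.elim_inr] at hc
      have h0 := congrFun hc 0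
      have h1 := congrFun hc 1
      have h2' := congrFun hc 2
      simp only [Pi.smul_apply, smul_eq_mul, Matrix.cons_val_zero, Matrix.cons_val_one,
        Matrix.head_cons, Matrix.cons_val_two, Matrix.tail_cons] at h0 h1 h2'
      rw [mul_one] at h0
      rw [h0, one_mul] at h1 h2'
      obtain rfl := pinj _ _ h1
      obtain rfl := pinj _ _ h2'
      rfl
  have cube3 : ∀ x : K, x ≠ 0 → x * (x * x) = 1 := fun x hx => by
    have := cube x hx; linear_combination this
  have hFsurj : Function.Surjective F := by
    intro S
    obtain ⟨v, hv0, hvspan, hvpsi⟩ := span_of_vertex τ S.2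
    rw [psi3] at hvpsi
    have hmk : ∀ x, Submodule.span K {f x} = S.1 → F x = S := by
      intro x hx
      exact Subtype.ext (by rw [hF1 x]; exact hx)
    rcases eq_or_ne (v 0) 0 with h0 | h0 <;> rcases eq_or_ne (v 1) 0 with h1 | h1 <;>
      rcases eq_or_ne (v 2) 0 with hv2 | hv2
    · exfalso
      apply hv0
      funext m; fin_cases m <;> assumption
    · refine ⟨Sum.inl 2, hmk _ ?_⟩
      rw [hvspan]
      simp only [hf, Sum.elim_inl]
      have hveq : v = v 2 • (Pi.single (2 : Fin 3) (1 : K) : Fin 3 → K) := by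
        funext m; fin_cases m <;> simp [Pi.single_apply, h0, h1]
      rw [hveq, Submodule.span_singleton_smul_eq (isUnit_iff_ne_zero.mpr hv2)]
    · refine ⟨Sum.inl 1, hmk _ ?_⟩
      rw [hvspan]
      simp only [hf, Sum.elim_inl]
      have hveq : v = v 1 • (Pi.single (1 : Fin 3) (1 : K) : Fin 3 → K) := by
        funext m; fin_cases m <;> simp [Pi.single_apply, h0, hv2]
      rw [hveq, Submodule.span_singleton_smul_eq (isUnit_iff_ne_zero.mpr h1)]
    · exfalso
      apply hvpsi
      rw [h0, cube3 _ h1, cube3 _ hv2]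
      linear_combination h2
    · refine ⟨Sum.inl 0, hmk _ ?_⟩
      rw [hvspan]
      simp only [hf, Sum.elim_inl]
      have hveq : v = v 0 • (Pi.single (0 : Fin 3) (1 : K) : Fin 3 → K) := by
        funext m; fin_cases m <;> simp [Pi.single_apply, h1, hv2]
      rw [hveq, Submodule.span_singleton_smul_eq (isUnit_iff_ne_zero.mpr h0)]
    · exfalso
      apply hvpsi
      rw [h1, cube3 _ h0, cube3 _ hv2]
      linear_combination h2
    · exfalso
      apply hvpsi
      rw [hv2, cube3 _ h0, cube3 _ h1]
      linear_combination h2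
    · obtain ⟨u1, hu1⟩ := exp ((v 0)⁻¹ * v 1) (mul_ne_zero (inv_ne_zero h0) h1)
      obtain ⟨u2, hu2⟩ := exp ((v 0)⁻¹ * v 2) (mul_ne_zero (inv_ne_zero h0) hv2)
      refine ⟨Sum.inr (u1, u2), hmk _ ?_⟩
      rw [hvspan]
      simp only [hf, Sum.elim_inr]
      have hveq : v = v 0 • ![1, p u1, p u2] := by
        funext m
        fin_cases m
        · simp
        · show v 1 = v 0 * ![1, p u1, p u2] 1
          simp only [Matrix.cons_val_one, Matrix.head_cons, Matrix.cons_val_zero]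
          rw [hu1, ← mul_assoc, mul_inv_cancel₀ h0, one_mul]
        · show v 2 = v 0 * ![1, p u1, p u2] 2
          simp only [Matrix.cons_val_two, Matrix.tail_cons, Matrix.head_cons]
          rw [hu2, ← mul_assoc, mul_inv_cancel₀ h0, one_mul]
      rw [hveq, Submodule.span_singleton_smul_eq (isUnit_iff_ne_zero.mpr h0)]
  have adjF : ∀ x y, x ≠ y → Psi ⇑τ (f x) (f y) = 0 →
      (FrameGraph τ hτ2 3).Adj (F x) (F y) := by
    intro x y hne h
    refine ⟨fun hcon => hne (hFinj hcon), ?_⟩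
    intro s hs w hw
    rw [hF1] at hs hw
    obtain ⟨c, rfl⟩ := Submodule.mem_span_singleton.mp hs
    obtain ⟨d, rfl⟩ := Submodule.mem_span_singleton.mp hw
    rw [Psi_smul_left, Psi_smul_right, h, mul_zero, mul_zero]
  have adjP : ∀ x y, (FrameGraph τ hτ2 3).Adj (F x) (F y) → Psi ⇑τ (f x) (f y) = 0 := by
    intro x y h
    exact h.2 (f x) (by rw [hF1]; exact Submodule.mem_span_singleton_self _) (f y)
      (by rw [hF1]; exact Submodule.mem_span_singleton_self _)
  have hcard : Nat.card (Option (ZMod 3)) = 4 := by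
    rw [Nat.card_eq_fintype_card, Fintype.card_option, ZMod.card]
  rw [← hcard]
  refine card_cc' (FrameGraph τ hτ2 3) F ⟨hFinj, hFsurj⟩
    (Sum.elim (fun _ => (none : Option (ZMod 3))) (fun z => some (z.1 + z.2))) ?_
    (fun o => o.elim (Sum.inl 0) (fun c => Sum.inr (0, c))) ?_ ?_
  · intro x y h
    rcases x with i | ⟨i, j⟩ <;> rcases y with k | ⟨i', j'⟩
    · rfl
    · exact absurd (adjP _ _ h) (psi_lr i _)
    · exact absurd (adjP _ _ h) (psi_rl _ k)
    · have hpsi := adjP _ _ h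
      rw [psi_rr] at hpsi
      have hsum := ksum _ _ hpsi
      simp only [Sum.elim_inr]
      exact congrArg some ((by decide :
        ∀ i j i' j' : ZMod 3, (i + (i' + i')) + (j + (j' + j')) = 0 → i + j = i' + j')
        i j i' j' hsum)
  · intro b
    rcases b with _ | c
    · rfl
    · simp
  · intro x
    rcases x with i | ⟨i, j⟩
    · simp only [Sum.elim_inl, Option.elim_none]
      rcases eq_or_ne i 0 with h | h
      · subst h
        exact SimpleGraph.Reachable.refl _
      · exact (adjF _ _ (fun hcon => h (Sum.inl.inj hcon).symm)
          (psi_ll 0 i (fun hcon => h hcon.symm))).reachable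
    · simp only [Sum.elim_inr, Option.elim_some]
      rcases eq_or_ne i 0 with h | h
      · subst h
        rw [zero_add]
      · refine (adjF _ _ ?_ ?_).reachable
        · intro hcon
          exact h (congrArg Prod.fst (Sum.inr.inj hcon)).symm
        · rw [psi_rr,
            show (0 : ZMod 3) + (i + i) = -i from
              (by decide : ∀ i : ZMod 3, (0 : ZMod 3) + (i + i) = -i) i,
            show (i + j) + (j + j) = i from
              (by decide : ∀ i j : ZMod 3, (i + j) + (j + j) = i) i j]
          have hk := kzero (-i) (neg_ne_zero.mpr h)
          rwa [neg_neg] at hk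

/-- For `q = 2` (so `K` has exactly `4` elements) and `n = 3`, the graph
`G(V)` has exactly `4` connected components. -/
theorem statement8 [Fintype K] (hK : Fintype.card K = 2 ^ 2)
    (τ : K →+* K) (hτq : ∀ x, τ x = x ^ 2) :
    Nat.card ((FrameGraph τ (tau_invol hK τ hτq) 3).ConnectedComponent) = 4 :=
  main_aux hK τ hτq (tau_invol hK τ hτq)

end FramePaper
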